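/- Let G be a group generated by elements a and b subject to t² = 1 and t⁻¹at = b, i.e. G = F(a,b) ⋊ ℤ/2ℤ where the involution t swaps the free generators a and b, and let H = ⟨a, b⟩ be the free group of rank 2 inside G. Then the action of H on ℝ in which a acts by translation x ↦ x + 1 and b acts trivially admits no extension to an isometric action of G on any metric space: in any isometric G-action, the orbits of ⟨a⟩ are bounded if and only if the orbits of ⟨b⟩ are bounded, since a and b are conjugate in G. -/
import Mathlib


/-- Let `G` be a group with elements `a, b, u` satisfying `u² = 1` and `u⁻¹ a u = b`
(as in `G = F(a,b) ⋊ ℤ/2ℤ` with `u` swapping the free generators), let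
`H = ⟨a, b⟩ ≤ G`, and let `H` act on `ℝ` by translations via a homomorphism `ψ` with
`ψ(a) = 1` and `ψ(b) = 0` (so `a` translates by `1` and `b` acts trivially). Then this
action of `H` on `ℝ` admits no extension to an isometric action of `G` on any metric
space: there is no isometric `G`-action together with a coarsely `H`-equivariant
quasi-isometric embedding `ℝ → S`. -/
theorem no_extension_of_translation_action {G : Type} [Group G] (a b u : G)
    (hu2 : u * u = 1) (hconj : u⁻¹ * a * u = b)
    (ψ : (Subgroup.closure ({a, b} : Set G)) →* Multiplicative ℝ)
    (hψa : ψ ⟨a, Subgroup.subset_closure (Set.mem_insert a {b})⟩ = Multiplicative.ofAdd 1)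
    (hψb : ψ ⟨b, Subgroup.subset_closure (Set.mem_insert_of_mem a rfl)⟩ =
      Multiplicative.ofAdd 0) :
    ¬ ∃ (S : Type) (_ : MetricSpace S) (σ : G → S → S),
        (∀ x, σ 1 x = x) ∧ (∀ g g' x, σ (g * g') x = σ g (σ g' x)) ∧
        (∀ g x y, dist (σ g x) (σ g y) = dist x y) ∧
        ∃ f : ℝ → S,
          (∃ C : ℝ, 1 ≤ C ∧ ∀ x y : ℝ,
            (1 / C) * dist x y - C ≤ dist (f x) (f y) ∧
            dist (f x) (f y) ≤ C * dist x y + C) ∧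
          (∀ x : ℝ, ∃ D : ℝ, ∀ h : (Subgroup.closure ({a, b} : Set G)),
            dist (f (Multiplicative.toAdd (ψ h) + x)) (σ (h : G) (f x)) ≤ D) := by
  rintro ⟨S, _, σ, hσ1, hσm, hσiso, f, ⟨C, hC1, hQI⟩, hcoarse⟩
  obtain ⟨D, hD⟩ := hcoarse 0
  set aH : (Subgroup.closure ({a, b} : Set G)) :=
    ⟨a, Subgroup.subset_closure (Set.mem_insert a {b})⟩ with haH
  set bH : (Subgroup.closure ({a, b} : Set G)) :=
    ⟨b, Subgroup.subset_closure (Set.mem_insert_of_mem a rfl)⟩ with hbH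
  have huinv : u⁻¹ = u := inv_eq_of_mul_eq_one_right hu2
  have ha : a = u * b * u := by
    rw [← hconj, huinv,
      show u * (u * a * u) * u = (u * u) * a * (u * u) from by group, hu2,
      one_mul, mul_one]
  have hpow : ∀ n : ℕ, a ^ n = u * b ^ n * u := by
    intro n
    have : a ^ n = (u * b * u⁻¹) ^ n := by rw [huinv, ← ha]
    rw [this, conj_pow, huinv]
  have hψan : ∀ n : ℕ, Multiplicative.toAdd (ψ (aH ^ n)) = (n : ℝ) := by
    intro n
    rw [map_pow, hψa]
    simp
  have hψbn : ∀ n : ℕ, Multiplicative.toAdd (ψ (bH ^ n)) = (0 : ℝ) := by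
    intro n
    rw [map_pow, hψb]
    simp
  set z := σ u (f 0) with hz
  -- σ u (σ u x) = x
  have huu : ∀ x : S, σ u (σ u x) = x := by
    intro x; rw [← hσm, hu2, hσ1]
  have key : ∀ n : ℕ, dist (f n) (f 0) ≤ 2 * D + 2 * dist z (f 0) := by
    intro n
    have h1 := hD (aH ^ n)
    have h2 := hD (bH ^ n)
    rw [hψan, add_zero] at h1
    rw [hψbn, zero_add] at h2
    have hca : ((aH ^ n : Subgroup.closure ({a, b} : Set G)) : G) = a ^ n := by
      simp [haH]
    have hcb : ((bH ^ n : Subgroup.closure ({a, b} : Set G)) : G) = b ^ n := by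
      simp [hbH]
    rw [hca] at h1
    rw [hcb] at h2
    -- dist (σ (a^n) (f 0)) (f 0) = dist (σ (b^n) z) z
    have e1 : dist (σ (a ^ n) (f 0)) (f 0) = dist (σ (b ^ n) z) z := by
      have : σ (a ^ n) (f 0) = σ u (σ (b ^ n) z) := by
        rw [hpow n, hσm, hσm, hz]
      rw [this]
      calc dist (σ u (σ (b ^ n) z)) (f 0)
          = dist (σ u (σ (b ^ n) z)) (σ u (σ u (f 0))) := by rw [huu]
        _ = dist (σ (b ^ n) z) (σ u (f 0)) := hσiso u _ _
        _ = dist (σ (b ^ n) z) z := by rw [hz]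
    have e2 : dist (σ (b ^ n) z) z ≤ D + 2 * dist z (f 0) := by
      calc dist (σ (b ^ n) z) z
          ≤ dist (σ (b ^ n) z) (σ (b ^ n) (f 0)) + dist (σ (b ^ n) (f 0)) (f 0)
            + dist (f 0) z := dist_triangle4 _ _ _ _
        _ = dist z (f 0) + dist (σ (b ^ n) (f 0)) (f 0) + dist (f 0) z := by
            rw [hσiso]
        _ ≤ dist z (f 0) + D + dist (f 0) z := by
            have := dist_comm (f 0) (σ (b ^ n) (f 0)) ▸ h2
            linarith [dist_comm (f 0) (σ (b ^ n) (f 0)) ▸ h2,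
              dist_comm (σ (b ^ n) (f 0)) (f 0)]
        _ = D + 2 * dist z (f 0) := by rw [dist_comm (f 0) z]; ring
    calc dist (f n) (f 0)
        ≤ dist (f n) (σ (a ^ n) (f 0)) + dist (σ (a ^ n) (f 0)) (f 0) :=
          dist_triangle _ _ _
      _ ≤ D + (D + 2 * dist z (f 0)) := by rw [e1]; exact add_le_add h1 e2
      _ = 2 * D + 2 * dist z (f 0) := by ring
  -- lower bound contradiction
  have hCpos : (0 : ℝ) < C := lt_of_lt_of_le one_pos hC1
  obtain ⟨n, hn⟩ := exists_nat_gt (C * (2 * D + 2 * dist z (f 0) + C))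
  have hlow := (hQI n 0).1
  have hdist : dist (n : ℝ) (0 : ℝ) = n := by
    simp [Real.dist_eq, abs_of_nonneg (by positivity : (0:ℝ) ≤ (n:ℝ))]
  rw [hdist] at hlow
  have := key n
  have hle : (1 / C) * n - C ≤ 2 * D + 2 * dist z (f 0) := le_trans hlow this
  have : (n : ℝ) ≤ C * (2 * D + 2 * dist z (f 0) + C) := by
    rw [div_mul_eq_mul_div, one_mul] at hle
    have := (div_le_iff₀ hCpos).mp (by linarith : (n : ℝ) / C ≤ 2 * D + 2 * dist z (f 0) + C)
    linarith [this]
  linarith
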